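/- arXiv:1502.06061 — 4 statements merged into one kernel-verified Lean document; each statement's English description precedes it below -/
import Mathlib

section
/- Let V be a finite-dimensional real topological vector space of dimension n ≥ 3 equipped with a symmetric bilinear form B, and let h ∈ V satisfy B(h,h) = 1, with B negative definite on the hyperplane {v ∈ V : B(v,h) = 0}. Let N ⊆ V be a closed convex cone such that (i) B(v,h) > 0 for every nonzero v ∈ N, and (ii) every v ∈ V with B(v,v) > 0 and B(v,h) > 0 lies in the topological interior of N. Suppose there exist e, f ∈ V such that: e ∈ N, e ≠ 0, B(e,e) = 0; f ≠ 0, B(f,h) = 0, B(e,f) = 0; and (e + ℝ·f) ∩ N = {e}. Then N is not a polyhedral cone, i.e., N is not the set of all nonnegative linear combinations of any finite subset of V. -/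
open Finset

section Aux

variable {V : Type*} [AddCommGroup V] [Module ℝ V]

/-- Conic Carathéodory: any nonnegative combination over `s` is a nonnegative combination
over a subset `t ⊆ s` on which the vectors are linearly independent. -/
theorem carath_cone {ι : Type*} [DecidableEq ι] (g : ι → V) :
    ∀ s : Finset ι, ∀ c : ι → ℝ, (∀ i, 0 ≤ c i) →
    ∃ t : Finset ι, t ⊆ s ∧ LinearIndependent ℝ (fun i : {x // x ∈ t} => g ↑i) ∧
      ∃ d : ι → ℝ, (∀ i, 0 ≤ d i) ∧ ∑ i ∈ t, d i • g i = ∑ i ∈ s, c i • g i := by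
  intro s
  induction s using Finset.strongInduction with
  | _ s ih =>
    intro c hc
    by_cases hli : LinearIndependent ℝ (fun i : {x // x ∈ s} => g ↑i)
    · exact ⟨s, Finset.Subset.refl s, hli, c, hc, rfl⟩
    · obtain ⟨d₀, hd₀sum, i₁, hd₀i₁⟩ := Fintype.not_linearIndependent_iff.mp hli
      -- extend d₀ to ι by 0
      set D : ι → ℝ := fun i => if h : i ∈ s then d₀ ⟨i, h⟩ else 0 with hD
      have hDext : ∀ i : {x // x ∈ s}, D ↑i = d₀ i := by
        rintro ⟨i, hi⟩; exact dif_pos hi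
      have hDout : ∀ i ∉ s, D i = 0 := by intro i hi; simp [hD, hi]
      have hDsum : ∑ i ∈ s, D i • g i = 0 := by
        rw [← Finset.sum_coe_sort s (fun i => D i • g i)]
        rw [Finset.sum_congr rfl fun i _ => by rw [hDext i]]
        exact hd₀sum
      -- key argument, for a relation with a positive coefficient
      have key : ∀ E : ι → ℝ, (∀ i ∉ s, E i = 0) → (∑ i ∈ s, E i • g i = 0) →
          (∃ i ∈ s, 0 < E i) → ∃ t : Finset ι, t ⊆ s ∧
          LinearIndependent ℝ (fun i : {x // x ∈ t} => g ↑i) ∧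
          ∃ d : ι → ℝ, (∀ i, 0 ≤ d i) ∧ ∑ i ∈ t, d i • g i = ∑ i ∈ s, c i • g i := by
        intro E hEout hEsum hEpos
        classical
        obtain ⟨i₂, hi₂s, hi₂pos⟩ := hEpos
        have hPn : (s.filter fun i => 0 < E i).Nonempty :=
          ⟨i₂, Finset.mem_filter.mpr ⟨hi₂s, hi₂pos⟩⟩
        obtain ⟨i₀, hi₀P, hi₀min⟩ := Finset.exists_min_image _ (fun i => c i / E i) hPn
        obtain ⟨hi₀s, hi₀pos⟩ := Finset.mem_filter.mp hi₀P
        set lam := c i₀ / E i₀ with hlam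
        have hlam0 : 0 ≤ lam := div_nonneg (hc i₀) hi₀pos.le
        set c' : ι → ℝ := fun i => c i - lam * E i with hc'
        have hc'0 : ∀ i, 0 ≤ c' i := by
          intro i
          by_cases his : i ∈ s
          · by_cases hEi : 0 < E i
            · have := hi₀min i (Finset.mem_filter.mpr ⟨his, hEi⟩)
              have : lam * E i ≤ c i := by
                rw [hlam] at this ⊢
                exact (le_div_iff₀ hEi).mp this
              simp [hc']; linarith
            · push_neg at hEi
              have : lam * E i ≤ 0 := mul_nonpos_of_nonneg_of_nonpos hlam0 hEi
              have := hc i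
              simp [hc']; linarith
          · simp [hc', hEout i his, hc i]
        have hc'i₀ : c' i₀ = 0 := by
          simp [hc', hlam, div_mul_cancel₀ _ hi₀pos.ne']
        have hsum' : ∑ i ∈ s.erase i₀, c' i • g i = ∑ i ∈ s, c i • g i := by
          rw [Finset.sum_erase _ (by rw [hc'i₀, zero_smul])]
          have : ∀ i ∈ s, c' i • g i = c i • g i - lam • (E i • g i) := by
            intro i _; rw [hc']; rw [sub_smul, smul_smul]
          rw [Finset.sum_congr rfl this, Finset.sum_sub_distrib, ← Finset.smul_sum, hEsum,
            smul_zero, sub_zero]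
        obtain ⟨t, hts, hli', d, hd, hdsum⟩ := ih (s.erase i₀) (Finset.erase_ssubset hi₀s) c' hc'0
        exact ⟨t, hts.trans (Finset.erase_subset _ _), hli', d, hd, by rw [hdsum, hsum']⟩
      by_cases hpos : ∃ i ∈ s, 0 < D i
      · exact key D hDout hDsum hpos
      · apply key (fun i => - D i)
        · intro i hi; simp [hDout i hi]
        · rw [Finset.sum_congr rfl fun i _ => by rw [neg_smul], Finset.sum_neg_distrib, hDsum,
            neg_zero]
        · push_neg at hpos
          refine ⟨↑i₁, i₁.2, ?_⟩
          have h1 : D ↑i₁ ≠ 0 := by rw [hDext i₁]; exact hd₀i₁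
          have h2 : D ↑i₁ ≤ 0 := hpos ↑i₁ i₁.2
          simp only [neg_pos]
          exact lt_of_le_of_ne h2 h1

variable [TopologicalSpace V] [IsTopologicalAddGroup V] [ContinuousSMul ℝ V] [T2Space V]

/-- The cone generated by a linearly independent finite family is closed. -/
theorem isClosed_cone_indep {ι : Type*} [Fintype ι] (g : ι → V) (t : Finset ι)
    (hli : LinearIndependent ℝ (fun i : {x // x ∈ t} => g ↑i)) :
    IsClosed {x : V | ∃ c : ι → ℝ, (∀ i, 0 ≤ c i) ∧ x = ∑ i ∈ t, c i • g i} := by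
  classical
  set φ : ({x // x ∈ t} → ℝ) →ₗ[ℝ] V :=
    { toFun := fun c => ∑ i : {x // x ∈ t}, c i • g ↑i
      map_add' := by intro a b; simp [add_smul, Finset.sum_add_distrib]
      map_smul' := by intro r a; simp [smul_smul, Finset.smul_sum] } with hφ
  have hker : LinearMap.ker φ = ⊥ := by
    rw [LinearMap.ker_eq_bot']
    intro m hm
    have := Fintype.linearIndependent_iff.mp hli m hm
    funext i; exact this i
  have hce := LinearMap.isClosedEmbedding_of_injective (𝕜 := ℝ) (f := φ) hker
  have hsetclosed : IsClosed {c : {x // x ∈ t} → ℝ | ∀ i, 0 ≤ c i} := by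
    have : {c : {x // x ∈ t} → ℝ | ∀ i, 0 ≤ c i} = ⋂ i, {c | 0 ≤ c i} := by
      ext c; simp
    rw [this]
    exact isClosed_iInter fun i => isClosed_le continuous_const (continuous_apply i)
  have himg : {x : V | ∃ c : ι → ℝ, (∀ i, 0 ≤ c i) ∧ x = ∑ i ∈ t, c i • g i} =
      φ '' {c : {x // x ∈ t} → ℝ | ∀ i, 0 ≤ c i} := by
    ext x
    constructor
    · rintro ⟨c, hc, rfl⟩
      refine ⟨fun i => c ↑i, fun i => hc ↑i, ?_⟩
      simp only [hφ, LinearMap.coe_mk, AddHom.coe_mk]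
      exact Finset.sum_coe_sort t (fun i => c i • g i)
    · rintro ⟨d, hd, rfl⟩
      refine ⟨fun i => if h : i ∈ t then d ⟨i, h⟩ else 0, ?_, ?_⟩
      · intro i; by_cases h : i ∈ t <;> simp [h, hd _]
      · simp only [hφ, LinearMap.coe_mk, AddHom.coe_mk]
        rw [← Finset.sum_coe_sort t (fun i => (if h : i ∈ t then d ⟨i, h⟩ else 0) • g i)]
        apply Finset.sum_congr rfl
        rintro ⟨i, hi⟩ _
        simp [hi]
  rw [himg]
  exact hce.isClosedMap _ hsetclosed

/-- A finitely generated cone is closed. -/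
theorem isClosed_finCone {ι : Type*} [Fintype ι] (g : ι → V) (s : Finset ι) :
    IsClosed {x : V | ∃ c : ι → ℝ, (∀ i, 0 ≤ c i) ∧ x = ∑ i ∈ s, c i • g i} := by
  classical
  have hcov : {x : V | ∃ c : ι → ℝ, (∀ i, 0 ≤ c i) ∧ x = ∑ i ∈ s, c i • g i} =
      ⋃ t ∈ s.powerset.filter
        (fun t => LinearIndependent ℝ (fun i : {x // x ∈ t} => g ↑i)),
        {x : V | ∃ c : ι → ℝ, (∀ i, 0 ≤ c i) ∧ x = ∑ i ∈ t, c i • g i} := by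
    ext x
    simp only [Set.mem_iUnion, Set.mem_setOf_eq, Finset.mem_filter, Finset.mem_powerset,
      exists_prop]
    constructor
    · rintro ⟨c, hc, rfl⟩
      obtain ⟨t, hts, hli, d, hd, hdsum⟩ := carath_cone g s c hc
      exact ⟨t, ⟨hts, hli⟩, d, hd, hdsum.symm⟩
    · rintro ⟨t, ⟨hts, _⟩, c, hc, rfl⟩
      refine ⟨fun i => if i ∈ t then c i else 0,
        fun i => by by_cases h : i ∈ t <;> simp [h, hc _], ?_⟩
      rw [← Finset.sum_subset hts (fun i _ hit => by simp [hit])]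
      exact (Finset.sum_congr rfl fun i hit => by simp [hit]).symm
  rw [hcov]
  exact isClosed_biUnion_finset fun t ht =>
    isClosed_cone_indep g t (Finset.mem_filter.mp ht).2

end Aux

/-- Abstract convex-geometric criterion for non-polyhedrality of a closed convex cone
(Proposition 2.1 of the paper). -/
theorem stmt_0
    (V : Type*) [AddCommGroup V] [Module ℝ V] [TopologicalSpace V]
    [IsTopologicalAddGroup V] [ContinuousSMul ℝ V] [FiniteDimensional ℝ V]
    (hdim : 3 ≤ Module.finrank ℝ V)
    (B : LinearMap.BilinForm ℝ V) (hsymm : ∀ v w : V, B v w = B w v)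
    (h : V) (hh : B h h = 1)
    (hneg : ∀ v : V, v ≠ 0 → B v h = 0 → B v v < 0)
    (N : Set V) (hNclosed : IsClosed N) (hNconvex : Convex ℝ N)
    (hNcone : ∀ (c : ℝ) (v : V), 0 ≤ c → v ∈ N → c • v ∈ N)
    (hKleiman : ∀ v ∈ N, v ≠ 0 → 0 < B v h)
    (hbig : ∀ v : V, 0 < B v v → 0 < B v h → v ∈ interior N)
    (e f : V)
    (heN : e ∈ N) (he0 : e ≠ 0) (hee : B e e = 0)
    (hf0 : f ≠ 0) (hfh : B f h = 0) (hef : B e f = 0)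
    (hline : {v : V | ∃ s : ℝ, v = e + s • f} ∩ N = {e}) :
    ¬ ∃ S : Finset V, N = {x : V | ∃ c : V → ℝ, (∀ v, 0 ≤ c v) ∧
      x = ∑ v ∈ S, c v • v} := by
  classical
  rintro ⟨S, hS⟩
  -- additivity of N
  have hNadd : ∀ a ∈ N, ∀ b ∈ N, a + b ∈ N := by
    intro a ha b hb
    have hmid : (1/2 : ℝ) • a + (1/2 : ℝ) • b ∈ N :=
      hNconvex ha hb (by norm_num) (by norm_num) (by norm_num)
    have := hNcone 2 _ (by norm_num) hmid
    rwa [smul_add, smul_smul, smul_smul, (by norm_num : (2:ℝ) * (1/2) = 1), one_smul,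
      one_smul] at this
  have h0N : (0 : V) ∈ N := by
    have := hNcone 0 e le_rfl heN; rwa [zero_smul] at this
  -- V is T2
  haveI hT2 : T2Space V := by
    apply IsTopologicalAddGroup.t2Space_iff_zero_closed.mpr
    apply isClosed_of_closure_subset
    intro w hw
    by_contra hw0
    have hwN : w ∈ N := by
      have h1 : closure ({0} : Set V) ⊆ closure N :=
        closure_mono (Set.singleton_subset_iff.mpr h0N)
      rw [hNclosed.closure_eq] at h1
      exact h1 hw
    have hwneg : -w ∈ closure ({0} : Set V) := by
      have := image_closure_subset_closure_image (f := fun x : V => -x) continuous_neg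
        (s := ({0} : Set V))
      have hmem : -w ∈ (fun x : V => -x) '' closure ({0} : Set V) := ⟨w, hw, rfl⟩
      have := this hmem
      simpa using this
    have hwnegN : -w ∈ N := by
      have h1 : closure ({0} : Set V) ⊆ closure N :=
        closure_mono (Set.singleton_subset_iff.mpr h0N)
      rw [hNclosed.closure_eq] at h1
      exact h1 hwneg
    have p1 := hKleiman w hwN hw0
    have p2 := hKleiman (-w) hwnegN (neg_ne_zero.mpr hw0)
    rw [map_neg, LinearMap.neg_apply] at p2
    linarith
  -- basic constants
  have hK : 0 < B e h := hKleiman e heN he0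
  have hff : B f f < 0 := hneg f hf0 hfh
  set K := B e h with hKdef
  set C : ℝ := (1 - B f f) / (2 * K) with hCdef
  have hC : 0 < C := div_pos (by linarith) (by linarith)
  -- the curve lies in N
  have hexpand : ∀ s t : ℝ, B (e + s • f + t • h) (e + s • f + t • h)
      = s^2 * B f f + 2 * t * K + t^2 := by
    intro s t
    simp only [map_add, map_smul, LinearMap.add_apply, LinearMap.smul_apply, smul_eq_mul,
      hee, hef, hfh, hh, hsymm f e, hsymm h e, hsymm h f, hKdef]
    ring
  have hexpand2 : ∀ s t : ℝ, B (e + s • f + t • h) h = K + t := by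
    intro s t
    simp only [map_add, map_smul, LinearMap.add_apply, LinearMap.smul_apply, smul_eq_mul,
      hfh, hh, hKdef]
    ring
  have hcurve : ∀ s : ℝ, s ≠ 0 → e + s • f + (C * s^2) • h ∈ N := by
    intro s hs
    apply interior_subset
    apply hbig
    · rw [hexpand]
      have : s ^ 2 * B f f + 2 * (C * s ^ 2) * K + (C * s ^ 2) ^ 2
          = s^2 * (B f f + 2 * C * K) + (C * s^2)^2 := by ring
      rw [this]
      have h2CK : 2 * C * K = 1 - B f f := by
        rw [hCdef]; field_simp
      rw [h2CK]
      have hs2 : 0 < s ^ 2 := by positivity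
      nlinarith [sq_nonneg (C * s^2)]
    · rw [hexpand2]
      have : 0 ≤ C * s ^ 2 := by positivity
      linarith
  -- the enlarged cone T
  set g : ({v // v ∈ S} ⊕ Unit) → V := Sum.elim Subtype.val (fun _ => -e) with hg
  set T : Set V := {x : V | ∃ c : ({v // v ∈ S} ⊕ Unit) → ℝ, (∀ i, 0 ≤ c i) ∧
    x = ∑ i ∈ Finset.univ, c i • g i} with hT
  have hTclosed : IsClosed T := isClosed_finCone g Finset.univ
  -- membership lemma for T
  have hNT : ∀ n ∈ N, ∀ t : ℝ, 0 ≤ t → n + t • (-e) ∈ T := by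
    intro n hn t ht
    rw [hS] at hn
    obtain ⟨c, hc, rfl⟩ := hn
    refine ⟨Sum.elim (fun v => c ↑v) (fun _ => t), ?_, ?_⟩
    · rintro (i | i)
      · exact hc ↑i
      · exact ht
    · rw [Fintype.sum_sum_type]
      congr 1
      · rw [← Finset.sum_coe_sort S (fun v => c v • v)]
        rfl
      · rw [Fintype.sum_unique]
        rfl
  -- f + ε h ∈ T for all ε > 0
  have hfe : ∀ ε : ℝ, 0 < ε → f + ε • h ∈ T := by
    intro ε hε
    set s : ℝ := ε / C with hsdef
    have hs : 0 < s := div_pos hε hC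
    have hv := hcurve s hs.ne'
    have hn : (1/s) • (e + s • f + (C * s^2) • h) ∈ N :=
      hNcone _ _ (by positivity) hv
    have heq : (1/s) • (e + s • f + (C * s^2) • h) + (1/s) • (-e) = f + ε • h := by
      have e1 : (1/s) * s = 1 := one_div_mul_cancel hs.ne'
      have e2 : (1/s) * (C * s^2) = ε := by
        rw [hsdef]; field_simp
      rw [smul_add, smul_add, smul_smul, smul_smul, e1, e2, one_smul, smul_neg]
      abel
    have := hNT _ hn (1/s) (by positivity)
    rwa [heq] at this
  -- f ∈ T by closedness
  have hfT : f ∈ T := by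
    apply hTclosed.mem_of_tendsto (f := fun n : ℕ => f + (1 / (n + 1) : ℝ) • h)
      (b := Filter.atTop)
    · have h1 : Filter.Tendsto (fun n : ℕ => (1 / (n + 1) : ℝ)) Filter.atTop (nhds 0) :=
        tendsto_one_div_add_atTop_nhds_zero_nat
      have h2 : Filter.Tendsto (fun n : ℕ => (1 / (n + 1) : ℝ) • h) Filter.atTop (nhds (0 : V)) := by
        have := h1.smul_const h
        rwa [zero_smul] at this
      have := (tendsto_const_nhds (x := f) (f := Filter.atTop (α := ℕ))).add h2
      rwa [add_zero] at this
    · apply Filter.Eventually.of_forall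
      intro n
      exact hfe _ (by positivity)
  -- extract representation of f
  obtain ⟨d, hd, hdsum⟩ := hfT
  set n' : V := ∑ v : {v // v ∈ S}, d (Sum.inl v) • (v : V) with hn'
  set t : ℝ := d (Sum.inr ()) with ht
  have hfrep : f = n' + t • (-e) := by
    rw [hdsum, Fintype.sum_sum_type]
    congr 1
    rw [Fintype.sum_unique]
    rfl
  have hn'N : n' ∈ N := by
    rw [hS]
    refine ⟨fun v => if hv : v ∈ S then d (Sum.inl ⟨v, hv⟩) else 0, ?_, ?_⟩
    · intro v; by_cases hv : v ∈ S <;> simp [hv, hd _]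
    · rw [hn', ← Finset.sum_coe_sort S
        (fun v => (if hv : v ∈ S then d (Sum.inl ⟨v, hv⟩) else 0) • v)]
      apply Finset.sum_congr rfl
      rintro ⟨v, hv⟩ _
      simp [hv]
  have ht0 : 0 ≤ t := hd _
  -- final contradiction
  set ε : ℝ := 1 / (t + 1) with hε
  have hεpos : 0 < ε := by positivity
  have hmem : e + ε • f ∈ N := by
    have heq : e + ε • f = ε • n' + (1 - ε * t) • e := by
      rw [hfrep]
      module
    rw [heq]
    apply hNadd
    · exact hNcone _ _ hεpos.le hn'N
    · apply hNcone _ _ _ heN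
      have : ε * t ≤ 1 := by
        rw [hε]
        rw [div_mul_eq_mul_div, one_mul, div_le_one (by linarith)]
        linarith
      linarith
  have : e + ε • f ∈ ({e} : Set V) := by
    rw [← hline]
    exact ⟨⟨ε, rfl⟩, hmem⟩
  have : ε • f = 0 := add_eq_left.mp this
  rcases smul_eq_zero.mp this with h1 | h1
  · exact absurd h1 hεpos.ne'
  · exact hf0 h1
end

section
/- Let g, s, r be real numbers with g ≥ 2, s > 0, and r > (g+s)(g−1)/s. Let b₀ be a real number and b₁, b₂ nonnegative real numbers satisfying 2·b₁·b₂ + (2g−2)·b₁² ≥ 2g·b₀². Then b₁·√((g+s)·r) + b₂·√((g+s)/r) ≥ 2g·|b₀|. -/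
/-- Numerical core of Vojta's nefness criterion (Proposition 3.2). -/
theorem stmt_1 (g s r b₀ b₁ b₂ : ℝ)
    (hg : 2 ≤ g) (hs : 0 < s) (hr : (g + s) * (g - 1) / s < r)
    (hb₁ : 0 ≤ b₁) (hb₂ : 0 ≤ b₂)
    (hineq : 2 * g * b₀ ^ 2 ≤ 2 * b₁ * b₂ + (2 * g - 2) * b₁ ^ 2) :
    2 * g * |b₀| ≤ b₁ * Real.sqrt ((g + s) * r) + b₂ * Real.sqrt ((g + s) / r) := by
  have hgs : 0 < g + s := by linarith
  have hg1 : 0 < g - 1 := by linarith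
  have hr0 : 0 < r := lt_trans (by positivity) hr
  have hr' : (g + s) * (g - 1) ≤ s * r := by
    have := (div_lt_iff₀ hs).mp hr
    nlinarith
  set A := Real.sqrt ((g + s) * r) with hAdef
  set B := Real.sqrt ((g + s) / r) with hBdef
  have hA0 : 0 ≤ A := Real.sqrt_nonneg _
  have hB0 : 0 ≤ B := Real.sqrt_nonneg _
  have h1 : A ^ 2 = (g + s) * r := Real.sq_sqrt (by positivity)
  have hB2 : B ^ 2 = (g + s) / r := Real.sq_sqrt (by positivity)
  have h2 : r * B ^ 2 = g + s := by rw [hB2]; field_simp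
  have h3 : A * B = g + s := by
    rw [hAdef, hBdef, ← Real.sqrt_mul (by positivity)]
    have : (g + s) * r * ((g + s) / r) = (g + s) ^ 2 := by field_simp
    rw [this, Real.sqrt_sq hgs.le]
  have expand : (b₁ * A + b₂ * B) ^ 2
      = b₁ ^ 2 * ((g + s) * r) + 2 * b₁ * b₂ * (g + s) + b₂ ^ 2 * B ^ 2 := by
    rw [← h1, ← h3]; ring
  have hb : (g + s) * (b₂ ^ 2 * (r * B ^ 2)) = (g + s) * (b₂ ^ 2 * (g + s)) := by rw [h2]
  have hsos2 : (0:ℝ) ≤ b₁ ^ 2 * r * (s * r - (g - 1) * (g + s)) := by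
    have : (0:ℝ) ≤ s * r - (g - 1) * (g + s) := by nlinarith
    positivity
  have main : 4 * g * b₁ * b₂ + 4 * g * (g - 1) * b₁ ^ 2 ≤ (b₁ * A + b₂ * B) ^ 2 := by
    rw [expand]
    nlinarith [mul_pos hr0 hgs, hb,
      sq_nonneg (b₁ * r * (g - s) - b₂ * (g + s)),
      mul_nonneg hsos2 (by linarith : (0:ℝ) ≤ g)]
  have h4 : 2 * g * (2 * g * b₀ ^ 2) ≤ 2 * g * (2 * b₁ * b₂ + (2 * g - 2) * b₁ ^ 2) :=
    mul_le_mul_of_nonneg_left hineq (by linarith)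
  have key : (2 * g * |b₀|) ^ 2 ≤ (b₁ * A + b₂ * B) ^ 2 := by
    have habs : (2 * g * |b₀|) ^ 2 = 4 * g ^ 2 * b₀ ^ 2 := by
      rw [mul_pow, mul_pow, sq_abs]; ring
    rw [habs]
    nlinarith [main, h4]
  have hpos : 0 ≤ 2 * g * |b₀| := by positivity
  have hpos2 : 0 ≤ b₁ * A + b₂ * B := by positivity
  have := Real.sqrt_le_sqrt key
  rwa [Real.sqrt_sq hpos, Real.sqrt_sq hpos2] at this
end

section
/- Let g, s, r be real numbers with g > 1, s > 0, and r > 0, and let b₁, b₂ be nonnegative real numbers. If b₂²·(g+s)/r + 2·b₁·b₂·(s−g) + b₁²·((g+s)·r − 4g(g−1)) < 0, then r ≤ (g+s)(g−1)/s. -/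
/-- Discriminant step in the proof of Vojta's nefness criterion (Proposition 3.2). -/
theorem stmt_2 (g s r b₁ b₂ : ℝ)
    (hg : 1 < g) (hs : 0 < s) (hr : 0 < r)
    (hb₁ : 0 ≤ b₁) (hb₂ : 0 ≤ b₂)
    (hneg : b₂ ^ 2 * (g + s) / r + 2 * b₁ * b₂ * (s - g)
      + b₁ ^ 2 * ((g + s) * r - 4 * g * (g - 1)) < 0) :
    r ≤ (g + s) * (g - 1) / s := by
  have hgs : 0 < g + s := by linarith
  have hb1 : 0 < b₁ := by
    rcases hb₁.lt_or_eq with h | h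
    · exact h
    · exfalso
      have : b₂ ^ 2 * (g + s) / r < 0 := by
        simpa [← h] using hneg
      have h2 : 0 ≤ b₂ ^ 2 * (g + s) / r := by positivity
      linarith
  -- multiply hneg by r
  have hneg' : b₂ ^ 2 * (g + s) + 2 * b₁ * b₂ * (s - g) * r
      + b₁ ^ 2 * ((g + s) * r - 4 * g * (g - 1)) * r < 0 := by
    have hrne : r ≠ 0 := hr.ne'
    field_simp at hneg
    linarith
  rw [le_div_iff₀ hs]
  nlinarith [sq_nonneg ((g + s) * b₂ + b₁ * r * (s - g)),
    mul_pos (mul_pos (mul_pos (pow_pos hb1 2) hr) (by linarith : (0:ℝ) < g)) (by norm_num : (0:ℝ) < 4),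
    mul_pos hgs (neg_pos.mpr hneg'), hneg', hgs]
end

section
/- Let K ⊆ ℝ² be the convex hull of a finite set of points and assume K has nonempty interior. Let e ∈ K and let f ∈ ℝ² be a nonzero vector with (e + ℝ·f) ∩ K = {e}, and let p be a point in the interior of K. Then there exists m ∈ ℝ such that the closed segment joining e to p + m·f meets K only in the point e. -/
open Finset

/-- The "cross product with `f`" linear functional, vanishing on `f`. -/
private noncomputable def crossMap (f : ℝ × ℝ) : (ℝ × ℝ) →ₗ[ℝ] ℝ :=
  f.2 • LinearMap.fst ℝ ℝ ℝ - f.1 • LinearMap.snd ℝ ℝ ℝ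

private lemma crossMap_apply (f v : ℝ × ℝ) : crossMap f v = f.2 * v.1 - f.1 * v.2 := rfl

/-- The "inner product with `f`" linear functional. -/
private noncomputable def dotMap (f : ℝ × ℝ) : (ℝ × ℝ) →ₗ[ℝ] ℝ :=
  f.1 • LinearMap.fst ℝ ℝ ℝ + f.2 • LinearMap.snd ℝ ℝ ℝ

private lemma dotMap_apply (f v : ℝ × ℝ) : dotMap f v = f.1 * v.1 + f.2 * v.2 := rfl

private lemma fst_or_snd_ne {f : ℝ × ℝ} (hf : f ≠ 0) : f.1 ≠ 0 ∨ f.2 ≠ 0 := by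
  by_contra hc
  push_neg at hc
  exact hf (Prod.ext hc.1 hc.2)

private lemma cross_eq_zero {f a : ℝ × ℝ} (hf : f ≠ 0)
    (h : f.2 * a.1 - f.1 * a.2 = 0) : ∃ t : ℝ, a = t • f := by
  rcases fst_or_snd_ne hf with h1 | h2
  · refine ⟨a.1 / f.1, ?_⟩
    have h2 : a.2 = a.1 / f.1 * f.2 := by field_simp; linarith
    exact Prod.ext (by rw [Prod.smul_fst, smul_eq_mul, div_mul_cancel₀ _ h1]) (by rw [h2]; rfl)
  · refine ⟨a.2 / f.2, ?_⟩
    have h1 : a.1 = a.2 / f.2 * f.1 := by field_simp; linarith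
    exact Prod.ext (by rw [h1]; rfl) (by rw [Prod.smul_snd, smul_eq_mul, div_mul_cancel₀ _ h2])

private lemma dot_pos {f : ℝ × ℝ} (hf : f ≠ 0) : 0 < dotMap f f := by
  rw [dotMap_apply]
  rcases fst_or_snd_ne hf with h | h
  · nlinarith [mul_self_pos.mpr h, mul_self_nonneg f.2]
  · nlinarith [mul_self_pos.mpr h, mul_self_nonneg f.1]

/-- Point `e + t • f` with small `t > 0` lies in any ball around `e`. -/
private lemma step_in_ball {e f : ℝ × ℝ} (hf : f ≠ 0) {r : ℝ} (hr : 0 < r) :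
    e + (r / (2 * ‖f‖)) • f ∈ Metric.ball e r := by
  have hfn : (0:ℝ) < ‖f‖ := norm_pos_iff.mpr hf
  have htpos : 0 < r / (2 * ‖f‖) := by positivity
  simp only [Metric.mem_ball, dist_eq_norm]
  have h1 : e + (r / (2 * ‖f‖)) • f - e = (r / (2 * ‖f‖)) • f := by abel
  rw [h1, norm_smul, Real.norm_eq_abs, abs_of_pos htpos]
  have h2 : r / (2 * ‖f‖) * ‖f‖ = r / 2 := by field_simp
  rw [h2]
  linarith

/-- Main argument, with the separating functional `φ` given abstractly. -/
private lemma key (S : Finset (ℝ × ℝ)) (K : Set (ℝ × ℝ))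
    (hK : K = convexHull ℝ (S : Set (ℝ × ℝ)))
    (e : ℝ × ℝ) (f : ℝ × ℝ) (hf : f ≠ 0)
    (p : ℝ × ℝ) (hp : p ∈ interior K)
    (φ : (ℝ × ℝ) →ₗ[ℝ] ℝ) (hφf : φ f = 0)
    (hlin : ∀ x ∈ K, φ x = φ e → x = e)
    (hφp : φ e < φ p) (heK : e ∈ K) :
    ∃ m : ℝ, segment ℝ e (p + m • f) ∩ K = {e} := by
  have hconv : Convex ℝ K := hK ▸ convex_convexHull ℝ _
  -- e is not interior
  have heInt : e ∉ interior K := by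
    intro h
    obtain ⟨r, hr, hball⟩ := Metric.mem_nhds_iff.mp (mem_interior_iff_mem_nhds.mp h)
    have hfn : (0:ℝ) < ‖f‖ := norm_pos_iff.mpr hf
    have htpos : 0 < r / (2 * ‖f‖) := by positivity
    have hmem : e + (r / (2 * ‖f‖)) • f ∈ K := hball (step_in_ball hf hr)
    have h1 : e + (r / (2 * ‖f‖)) • f = e := hlin _ hmem (by simp [hφf])
    have h2 : (r / (2 * ‖f‖)) • f = 0 := by
      have := congrArg (fun z => z - e) h1
      simpa using this
    rcases smul_eq_zero.mp h2 with h' | h'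
    · exact absurd h' (ne_of_gt htpos)
    · exact hf h'
  -- K lies in the halfspace φ ≥ φ e
  have hKhalf : ∀ x ∈ K, φ e ≤ φ x := by
    intro x hx
    by_contra hlt
    push_neg at hlt
    have hd : (0:ℝ) < φ p - φ x := by linarith
    set t : ℝ := (φ e - φ x) / (φ p - φ x) with ht
    have ht0 : 0 < t := by apply div_pos <;> linarith
    have ht1 : t < 1 := by rw [ht, div_lt_one hd]; linarith
    have hz : t • p + (1 - t) • x ∈ interior K :=
      hconv.combo_interior_self_mem_interior hp hx ht0 (by linarith) (by ring)
    have hφz : φ (t • p + (1 - t) • x) = φ e := by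
      simp only [map_add, map_smul, smul_eq_mul]
      rw [ht]
      field_simp
      ring
    have := hlin _ (interior_subset hz) hφz
    rw [this] at hz
    exact heInt hz
  -- the finite set minus e
  set T : Finset (ℝ × ℝ) := S.erase e with hT
  have hTne : T.Nonempty := by
    rcases Finset.eq_empty_or_nonempty T with h | h
    · exfalso
      have hS : (S : Set (ℝ × ℝ)) ⊆ {e} := by
        intro x hx
        by_contra hxe
        have : x ∈ T := Finset.mem_erase.mpr ⟨hxe, hx⟩
        simp [h] at this
      have hKe : K ⊆ {e} := by
        rw [hK]
        have := convexHull_mono hS (𝕜 := ℝ)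
        simpa [convexHull_singleton] using this
      have hpe : p = e := hKe (interior_subset hp)
      rw [hpe] at hp
      exact heInt hp
    · exact h
  have hTK : ∀ x ∈ T, (x : ℝ × ℝ) ∈ K := fun x hx => by
    rw [hK]; exact subset_convexHull ℝ _ (Finset.mem_erase.mp hx).2
  -- ε : gap in φ
  set ε : ℝ := T.inf' hTne (fun x => φ x - φ e) with hε
  have hεpos : 0 < ε := by
    rw [hε, Finset.lt_inf'_iff]
    intro x hx
    have h1 := hKhalf x (hTK x hx)
    have h2 : φ x ≠ φ e := fun hc => (Finset.mem_erase.mp hx).1 (hlin x (hTK x hx) hc)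
    have : φ e < φ x := lt_of_le_of_ne h1 (Ne.symm h2)
    linarith
  have hεle : ∀ x ∈ T, φ e + ε ≤ φ x := by
    intro x hx
    have := Finset.inf'_le (fun x => φ x - φ e) hx
    rw [← hε] at this
    linarith
  clear_value ε
  clear hε
  -- ψ and its bound B on hull T
  set ψ : (ℝ × ℝ) →ₗ[ℝ] ℝ := dotMap f with hψ
  have hF : 0 < ψ f := dot_pos hf
  set B : ℝ := T.sup' hTne (fun x => |ψ x - ψ e|) with hB
  have hB0 : 0 ≤ B := by
    obtain ⟨x, hx⟩ := hTne
    exact le_trans (abs_nonneg _) (Finset.le_sup' (fun x => |ψ x - ψ e|) hx)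
  have hBle : ∀ x ∈ T, |ψ x - ψ e| ≤ B := fun x hx =>
    Finset.le_sup' (fun x => |ψ x - ψ e|) hx
  clear_value B
  clear hB
  -- hull T bounds
  have hhullφ : convexHull ℝ (T : Set (ℝ × ℝ)) ⊆ {y | φ e + ε ≤ φ y} := by
    apply convexHull_min
    · intro x hx; exact hεle x hx
    · exact (convex_Ici (φ e + ε)).linear_preimage φ
  have hhullψ : convexHull ℝ (T : Set (ℝ × ℝ)) ⊆ {y | |ψ y - ψ e| ≤ B} := by
    apply convexHull_min
    · intro x hx; exact hBle x hx
    · have heq : {y : ℝ × ℝ | |ψ y - ψ e| ≤ B} = ψ ⁻¹' Set.Icc (ψ e - B) (ψ e + B) := by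
        ext y
        simp only [Set.mem_setOf_eq, Set.mem_preimage, Set.mem_Icc, abs_sub_le_iff]
        constructor <;> intro h <;> constructor <;> linarith [h.1, h.2]
      rw [heq]
      exact (convex_Icc _ _).linear_preimage ψ
  -- K inside the join of e and hull T
  have hSub : K ⊆ convexJoin ℝ {e} (convexHull ℝ (T : Set (ℝ × ℝ))) := by
    rw [hK, ← convexHull_insert (Finset.coe_nonempty.mpr hTne)]
    apply convexHull_mono
    intro x hx
    by_cases hxe : x = e
    · exact Set.mem_insert_iff.mpr (Or.inl hxe)
    · exact Set.mem_insert_iff.mpr (Or.inr (Finset.mem_erase.mpr ⟨hxe, hx⟩))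
  -- choose m
  obtain ⟨A, hA⟩ : ∃ A : ℝ, A = (φ p - φ e) / ε := ⟨_, rfl⟩
  have hApos : 0 < A := hA ▸ div_pos (by linarith) hεpos
  obtain ⟨m, hm⟩ : ∃ m : ℝ, m = (A * B + |ψ (p - e)| + 1) / ψ f := ⟨_, rfl⟩
  have hmF : A * B + 1 ≤ m * ψ f + ψ (p - e) := by
    have h1 : m * ψ f = A * B + |ψ (p - e)| + 1 := by
      rw [hm]; exact div_mul_cancel₀ _ (ne_of_gt hF)
    rw [h1]
    have := neg_abs_le (ψ (p - e))
    linarith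
  refine ⟨m, ?_⟩
  ext z
  simp only [Set.mem_inter_iff, Set.mem_singleton_iff]
  constructor
  · rintro ⟨hseg, hzK⟩
    rw [segment_eq_image] at hseg
    obtain ⟨s, ⟨hs0, hs1⟩, hsz⟩ := hseg
    dsimp only at hsz
    by_cases hse : s = 0
    · rw [← hsz, hse]; simp
    have hs0' : 0 < s := lt_of_le_of_ne hs0 (Ne.symm hse)
    by_contra hze
    -- decompose z via the join
    obtain ⟨x, hx, y, hy, hzseg⟩ := mem_convexJoin.mp (hSub hzK)
    rw [Set.mem_singleton_iff] at hx
    rw [hx] at hzseg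
    rw [segment_eq_image] at hzseg
    obtain ⟨b, ⟨hb0, hb1⟩, hbz⟩ := hzseg
    dsimp only at hbz
    have hbne : b ≠ 0 := by
      intro hb
      rw [hb] at hbz
      simp at hbz
      exact hze hbz.symm
    have hbpos : 0 < b := lt_of_le_of_ne hb0 (Ne.symm hbne)
    -- φ computations
    have hφz1 : φ z = φ e + s * (φ p - φ e) := by
      rw [← hsz]
      simp only [map_add, map_smul, smul_eq_mul, hφf]
      ring
    have hyφ : φ e + ε ≤ φ y := hhullφ hy
    have hφz2 : φ e + b * ε ≤ φ z := by
      rw [← hbz]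
      simp only [map_add, map_smul, smul_eq_mul]
      nlinarith
    have hbA : b ≤ s * A := by
      have h1 : b * ε ≤ s * (φ p - φ e) := by linarith
      rw [hA, ← mul_div_assoc, le_div_iff₀ hεpos]
      linarith
    -- ψ computations
    have hψz1 : ψ z - ψ e = s * (ψ (p - e) + m * ψ f) := by
      rw [← hsz]
      simp only [map_add, map_smul, map_sub, smul_eq_mul]
      ring
    have hyψ : |ψ y - ψ e| ≤ B := hhullψ hy
    have hψz2 : |ψ z - ψ e| ≤ b * B := by
      rw [← hbz]
      have h3 : ψ ((1 - b) • e + b • y) - ψ e = b * (ψ y - ψ e) := by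
        simp only [map_add, map_smul, smul_eq_mul]; ring
      rw [h3, abs_mul, abs_of_pos hbpos]
      exact mul_le_mul_of_nonneg_left hyψ (le_of_lt hbpos)
    have hchain : ψ z - ψ e ≤ s * A * B :=
      calc ψ z - ψ e ≤ |ψ z - ψ e| := le_abs_self _
        _ ≤ b * B := hψz2
        _ ≤ s * A * B := mul_le_mul_of_nonneg_right hbA hB0
    have hlow : s * (A * B + 1) ≤ ψ z - ψ e := by
      rw [hψz1]
      exact mul_le_mul_of_nonneg_left (by linarith : A * B + 1 ≤ ψ (p - e) + m * ψ f) hs0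
    have hfin : s * (A * B + 1) = s * A * B + s := by ring
    linarith
  · intro hz
    subst hz
    exact ⟨left_mem_segment ℝ _ _, heK⟩

/-- Polyhedrality step (Proposition 2.1): for a convex polygon `K` with vertex `e` met by
the line `e + ℝ • f` only in `e`, and interior point `p`, some segment from `e` to
`p + m • f` meets `K` only in `e`. -/
theorem stmt_5
    (S : Finset (ℝ × ℝ)) (K : Set (ℝ × ℝ)) (hK : K = convexHull ℝ (S : Set (ℝ × ℝ)))
    (hKint : (interior K).Nonempty)
    (e : ℝ × ℝ) (heK : e ∈ K)
    (f : ℝ × ℝ) (hf : f ≠ 0)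
    (hline : {v : ℝ × ℝ | ∃ t : ℝ, v = e + t • f} ∩ K = {e})
    (p : ℝ × ℝ) (hp : p ∈ interior K) :
    ∃ m : ℝ, segment ℝ e (p + m • f) ∩ K = {e} := by
  set φ : (ℝ × ℝ) →ₗ[ℝ] ℝ := crossMap f with hφ
  have hφf : φ f = 0 := by rw [hφ, crossMap_apply]; ring
  have hlin : ∀ x ∈ K, φ x = φ e → x = e := by
    intro x hx hxe
    have hcr : f.2 * (x - e).1 - f.1 * (x - e).2 = 0 := by
      rw [hφ, crossMap_apply, crossMap_apply] at hxe
      simp only [Prod.fst_sub, Prod.snd_sub]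
      linarith
    obtain ⟨t, ht⟩ := cross_eq_zero hf hcr
    have hxl : x ∈ {v : ℝ × ℝ | ∃ t : ℝ, v = e + t • f} := by
      refine ⟨t, ?_⟩
      have := congrArg (fun z => e + z) ht
      simpa using this
    have : x ∈ ({e} : Set (ℝ × ℝ)) := hline ▸ Set.mem_inter hxl hx
    exact this
  -- e ∉ interior K (needed to show φ p ≠ φ e)
  have heInt : e ∉ interior K := by
    intro h
    obtain ⟨r, hr, hball⟩ := Metric.mem_nhds_iff.mp (mem_interior_iff_mem_nhds.mp h)
    have hfn : (0:ℝ) < ‖f‖ := norm_pos_iff.mpr hf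
    have htpos : 0 < r / (2 * ‖f‖) := by positivity
    have hmem : e + (r / (2 * ‖f‖)) • f ∈ K := hball (step_in_ball hf hr)
    have hmem' : e + (r / (2 * ‖f‖)) • f ∈ ({e} : Set (ℝ × ℝ)) := by
      rw [← hline]; exact Set.mem_inter ⟨_, rfl⟩ hmem
    rw [Set.mem_singleton_iff] at hmem'
    have h2 : (r / (2 * ‖f‖)) • f = 0 := by
      have := congrArg (fun z => z - e) hmem'
      simpa using this
    rcases smul_eq_zero.mp h2 with h' | h'
    · exact absurd h' (ne_of_gt htpos)
    · exact hf h'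
  have hφpne : φ p ≠ φ e := by
    intro hc
    have hpe : p = e := hlin p (interior_subset hp) hc
    rw [hpe] at hp
    exact heInt hp
  rcases lt_or_gt_of_ne hφpne with hlt | hgt
  · -- use -φ
    refine key S K hK e f hf p hp (-φ) (by simp [hφf]) ?_
      (by simp only [LinearMap.neg_apply]; linarith) heK
    intro x hx hxe
    apply hlin x hx
    simpa using hxe
  · exact key S K hK e f hf p hp φ hφf hlin hgt heK
end
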